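/- There do not exist real 3×3 matrices G₁ and G₃ such that for all ξ₁, ξ₂ ∈ ℝ, setting v = (−ξ₂, −ξ₁, 1) ∈ ℝ³, one has −10ξ₁⁴ = −⟨v, G₁v⟩ + (−ξ₂)·⟨v, G₃v⟩. -/

import Mathlib

/-- No Christoffel symbols (encoded by G₁, G₃) can make the geodesic equation
hold for the phase x·ξ + tξ₁ξ₂ + t²ξ₁⁵. -/
theorem no_metric_for_quintic_phase :
    ¬ ∃ G₁ G₃ : Matrix (Fin 3) (Fin 3) ℝ, ∀ ξ₁ ξ₂ : ℝ,
      (-10 : ℝ) * ξ₁ ^ 4 =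
        -(dotProduct ![-ξ₂, -ξ₁, 1] (G₁.mulVec ![-ξ₂, -ξ₁, 1]))
          + (-ξ₂) * dotProduct ![-ξ₂, -ξ₁, 1] (G₃.mulVec ![-ξ₂, -ξ₁, 1]) := by
  rintro ⟨G₁, G₃, h⟩
  have h0 := h 0 0
  have h1 := h 1 0
  have hm1 := h (-1) 0
  have h2 := h 2 0
  simp only [dotProduct, Matrix.mulVec, Fin.sum_univ_three,
    Matrix.cons_val_zero, Matrix.cons_val_one, Matrix.head_cons,
    Matrix.cons_val_two, Matrix.tail_cons, neg_zero, neg_neg] at h0 h1 hm1 h2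
  nlinarith [h0, h1, hm1, h2]
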